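/- Let γ ∈ ℝ with γ ∉ {−8, 0}. There exists a constant C > 0 (depending only on γ) such that |G(x,t)| ≤ C (1+|t|)^{−1/3} for all x ∈ ℤ and all t ∈ ℝ. -/

import Mathlib

open MeasureTheory

/-- The fundamental solution of the discrete fourth-order Schrödinger equation
`i∂ₜu + Δ²u − γΔu = 0` on the lattice `ℤ`. -/
noncomputable def G1 (γ : ℝ) (x : ℤ) (t : ℝ) : ℂ :=
  (2 * Real.pi)⁻¹ * ∫ ξ in (-Real.pi)..Real.pi,
    Complex.exp (Complex.I *
      (((x : ℝ) * ξ + ((2 - 2 * Real.cos ξ) ^ 2 + γ * (2 - 2 * Real.cos ξ)) * t : ℝ) : ℂ))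

open intervalIntegral Set

set_option maxHeartbeats 2000000

noncomputable def E (φ : ℝ → ℝ) (ξ : ℝ) : ℂ := Complex.exp (Complex.I * (φ ξ : ℂ))

lemma normE (φ : ℝ → ℝ) (ξ : ℝ) : ‖E φ ξ‖ = 1 := by
  simp [E, Complex.norm_exp]

lemma contE {φ : ℝ → ℝ} (hφ : Continuous φ) : Continuous (E φ) := by
  unfold E; fun_prop

lemma hasDerivE {φ φ' : ℝ → ℝ} (hφ : ∀ ξ, HasDerivAt φ (φ' ξ) ξ) (ξ : ℝ) :
    HasDerivAt (E φ) (Complex.I * (φ' ξ : ℂ) * E φ ξ) ξ := by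
  have h := (((hφ ξ).ofReal_comp).const_mul Complex.I).cexp
  rw [show Complex.I * (φ' ξ : ℂ) * E φ ξ
      = Complex.exp (Complex.I * ↑(φ ξ)) * (Complex.I * ↑(φ' ξ)) by rw [E]; ring]
  exact h

lemma osc0 {φ : ℝ → ℝ} {a b : ℝ} (hab : a ≤ b) :
    ‖∫ ξ in a..b, E φ ξ‖ ≤ b - a := by
  have := intervalIntegral.norm_integral_le_of_norm_le_const (C := 1) (f := E φ) (a := a) (b := b)
    (by intro x hx; rw [normE])
  rwa [abs_of_nonneg (by linarith), one_mul] at this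

lemma osc2pos {φ φ' φ'' : ℝ → ℝ} {a b δ : ℝ} (hab : a ≤ b) (hδ : 0 < δ)
    (hd1 : ∀ ξ, HasDerivAt φ (φ' ξ) ξ) (hd2 : ∀ ξ, HasDerivAt φ' (φ'' ξ) ξ)
    (hc2 : Continuous φ'')
    (hlow : ∀ ξ ∈ Icc a b, δ ≤ φ' ξ)
    (hsign : (∀ ξ ∈ Icc a b, 0 ≤ φ'' ξ) ∨ (∀ ξ ∈ Icc a b, φ'' ξ ≤ 0)) :
    ‖∫ ξ in a..b, E φ ξ‖ ≤ 3 / δ := by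
  have hc1 : Continuous φ' := by
    rw [continuous_iff_continuousAt]; exact fun ξ => (hd2 ξ).continuousAt
  have hc0 : Continuous φ := by
    rw [continuous_iff_continuousAt]; exact fun ξ => (hd1 ξ).continuousAt
  have huIcc : uIcc a b = Icc a b := uIcc_of_le hab
  have hpos : ∀ ξ ∈ Icc a b, 0 < φ' ξ := fun ξ hξ => lt_of_lt_of_le hδ (hlow ξ hξ)
  have hne : ∀ ξ ∈ Icc a b, (φ' ξ : ℂ) ≠ 0 := by
    intro ξ hξ
    exact_mod_cast ne_of_gt (hpos ξ hξ)
  have hIne : ∀ ξ ∈ Icc a b, (Complex.I * (φ' ξ : ℂ)) ≠ 0 := fun ξ hξ =>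
    mul_ne_zero Complex.I_ne_zero (hne ξ hξ)
  -- derivative of u * E φ
  have hg : ∀ ξ ∈ uIcc a b, HasDerivAt (fun ξ => (Complex.I * (φ' ξ : ℂ))⁻¹ * E φ ξ)
      (-(Complex.I * (φ'' ξ : ℂ)) / (Complex.I * (φ' ξ : ℂ)) ^ 2 * E φ ξ + E φ ξ) ξ := by
    intro ξ hξ
    rw [huIcc] at hξ
    have h1 : HasDerivAt (fun ξ : ℝ => Complex.I * (φ' ξ : ℂ)) (Complex.I * (φ'' ξ : ℂ)) ξ :=
      ((hd2 ξ).ofReal_comp).const_mul Complex.I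
    have h2 : HasDerivAt (fun ξ : ℝ => (Complex.I * (φ' ξ : ℂ))⁻¹)
        (-(Complex.I * (φ'' ξ : ℂ)) / (Complex.I * (φ' ξ : ℂ)) ^ 2) ξ := by
      have := (hasDerivAt_const ξ (1:ℂ)).div h1 (hIne ξ hξ)
      rw [show (fun ξ : ℝ => (Complex.I * (φ' ξ : ℂ))⁻¹)
          = (fun ξ : ℝ => 1 / (Complex.I * (φ' ξ : ℂ))) by funext y; rw [one_div]]
      exact this.congr_deriv (by ring)
    have h3 := h2.mul (hasDerivE hd1 ξ)
    have h4 : (Complex.I * (φ' ξ : ℂ))⁻¹ * (Complex.I * (φ' ξ : ℂ) * E φ ξ) = E φ ξ := by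
      rw [← mul_assoc, inv_mul_cancel₀ (hIne ξ hξ), one_mul]
    rwa [h4] at h3
  have hintDE : IntervalIntegrable
      (fun ξ => -(Complex.I * (φ'' ξ : ℂ)) / (Complex.I * (φ' ξ : ℂ)) ^ 2 * E φ ξ) volume a b := by
    apply ContinuousOn.intervalIntegrable
    rw [huIcc]
    apply ContinuousOn.mul _ (contE hc0).continuousOn
    apply ContinuousOn.div
    · fun_prop
    · fun_prop
    · intro ξ hξ
      exact pow_ne_zero 2 (hIne ξ hξ)
  have hintE : IntervalIntegrable (E φ) volume a b := (contE hc0).intervalIntegrable a b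
  have hftc := intervalIntegral.integral_eq_sub_of_hasDerivAt hg (hintDE.add hintE)
  have hsplit : ∫ ξ in a..b, E φ ξ
      = (Complex.I * (φ' b : ℂ))⁻¹ * E φ b - (Complex.I * (φ' a : ℂ))⁻¹ * E φ a
        - ∫ ξ in a..b, -(Complex.I * (φ'' ξ : ℂ)) / (Complex.I * (φ' ξ : ℂ)) ^ 2 * E φ ξ := by
    rw [← hftc, intervalIntegral.integral_add hintDE hintE]; ring
  -- norms of boundary terms
  have hmem_a : a ∈ Icc a b := ⟨le_refl a, hab⟩
  have hmem_b : b ∈ Icc a b := ⟨hab, le_refl b⟩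
  have hubd : ∀ ξ ∈ Icc a b, ‖(Complex.I * (φ' ξ : ℂ))⁻¹ * E φ ξ‖ ≤ 1 / δ := by
    intro ξ hξ
    rw [norm_mul, normE, mul_one, norm_inv, norm_mul, Complex.norm_I, one_mul,
      Complex.norm_real, Real.norm_eq_abs, abs_of_pos (hpos ξ hξ), one_div]
    exact inv_anti₀ hδ (hlow ξ hξ)
  -- the variation integral
  have hDnorm : ∀ ξ ∈ Icc a b,
      ‖-(Complex.I * (φ'' ξ : ℂ)) / (Complex.I * (φ' ξ : ℂ)) ^ 2 * E φ ξ‖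
        = |φ'' ξ| / (φ' ξ) ^ 2 := by
    intro ξ hξ
    rw [norm_mul, normE, mul_one, norm_div, norm_neg, norm_mul, norm_pow, norm_mul,
      Complex.norm_I, one_mul, one_mul, Complex.norm_real, Complex.norm_real,
      Real.norm_eq_abs, Real.norm_eq_abs, sq_abs]
  -- FTC for the real integral of φ''/φ'^2
  have hreal : ∫ ξ in a..b, φ'' ξ / (φ' ξ) ^ 2 = (φ' a)⁻¹ - (φ' b)⁻¹ := by
    have hg2 : ∀ ξ ∈ uIcc a b, HasDerivAt (fun ξ => -(φ' ξ)⁻¹) (φ'' ξ / (φ' ξ) ^ 2) ξ := by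
      intro ξ hξ
      rw [huIcc] at hξ
      have := ((hd2 ξ).inv (ne_of_gt (hpos ξ hξ))).neg
      rw [show φ'' ξ / φ' ξ ^ 2 = -(-φ'' ξ / φ' ξ ^ 2) by ring]
      exact this
    have hint2 : IntervalIntegrable (fun ξ => φ'' ξ / (φ' ξ) ^ 2) volume a b := by
      apply ContinuousOn.intervalIntegrable
      rw [huIcc]
      exact ContinuousOn.div hc2.continuousOn (by fun_prop)
        (fun ξ hξ => pow_ne_zero 2 (ne_of_gt (hpos ξ hξ)))
    rw [intervalIntegral.integral_eq_sub_of_hasDerivAt hg2 hint2]; ring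
  have hvarbd : (∫ ξ in a..b, |φ'' ξ| / (φ' ξ) ^ 2) ≤ 1 / δ := by
    rcases hsign with hs | hs
    · have : ∫ ξ in a..b, |φ'' ξ| / (φ' ξ) ^ 2 = ∫ ξ in a..b, φ'' ξ / (φ' ξ) ^ 2 := by
        apply intervalIntegral.integral_congr
        intro ξ hξ
        rw [huIcc] at hξ
        dsimp only
        rw [abs_of_nonneg (hs ξ hξ)]
      rw [this, hreal]
      have h1 : (φ' a)⁻¹ ≤ 1 / δ := by
        rw [one_div]; exact inv_anti₀ hδ (hlow a hmem_a)
      have h2 : 0 < (φ' b)⁻¹ := inv_pos.2 (hpos b hmem_b)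
      linarith
    · have : ∫ ξ in a..b, |φ'' ξ| / (φ' ξ) ^ 2 = ∫ ξ in a..b, -(φ'' ξ / (φ' ξ) ^ 2) := by
        apply intervalIntegral.integral_congr
        intro ξ hξ
        rw [huIcc] at hξ
        dsimp only
        rw [abs_of_nonpos (hs ξ hξ), neg_div]
      rw [this, intervalIntegral.integral_neg, hreal]
      have h1 : (φ' b)⁻¹ ≤ 1 / δ := by
        rw [one_div]; exact inv_anti₀ hδ (hlow b hmem_b)
      have h2 : 0 < (φ' a)⁻¹ := inv_pos.2 (hpos a hmem_a)
      linarith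
  have hintnorm : ‖∫ ξ in a..b, -(Complex.I * (φ'' ξ : ℂ)) / (Complex.I * (φ' ξ : ℂ)) ^ 2 * E φ ξ‖
      ≤ 1 / δ := by
    calc ‖∫ ξ in a..b, -(Complex.I * (φ'' ξ : ℂ)) / (Complex.I * (φ' ξ : ℂ)) ^ 2 * E φ ξ‖
        ≤ ∫ ξ in a..b, ‖-(Complex.I * (φ'' ξ : ℂ)) / (Complex.I * (φ' ξ : ℂ)) ^ 2 * E φ ξ‖ :=
          intervalIntegral.norm_integral_le_integral_norm hab
      _ = ∫ ξ in a..b, |φ'' ξ| / (φ' ξ) ^ 2 := by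
          apply intervalIntegral.integral_congr
          intro ξ hξ
          rw [huIcc] at hξ
          exact hDnorm ξ hξ
      _ ≤ 1 / δ := hvarbd
  rw [hsplit]
  calc ‖(Complex.I * (φ' b : ℂ))⁻¹ * E φ b - (Complex.I * (φ' a : ℂ))⁻¹ * E φ a
        - ∫ ξ in a..b, -(Complex.I * (φ'' ξ : ℂ)) / (Complex.I * (φ' ξ : ℂ)) ^ 2 * E φ ξ‖
      ≤ ‖(Complex.I * (φ' b : ℂ))⁻¹ * E φ b‖ + ‖(Complex.I * (φ' a : ℂ))⁻¹ * E φ a‖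
        + ‖∫ ξ in a..b, -(Complex.I * (φ'' ξ : ℂ)) / (Complex.I * (φ' ξ : ℂ)) ^ 2 * E φ ξ‖ := by
        apply (norm_sub_le _ _).trans
        gcongr
        exact norm_sub_le _ _
    _ ≤ 1 / δ + 1 / δ + 1 / δ :=
        add_le_add (add_le_add (hubd b hmem_b) (hubd a hmem_a)) hintnorm
    _ = 3 / δ := by ring

lemma norm_int_neg (φ : ℝ → ℝ) (a b : ℝ) :
    ‖∫ ξ in a..b, E (fun ξ => -φ ξ) ξ‖ = ‖∫ ξ in a..b, E φ ξ‖ := by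
  have h : ∀ ξ, E (fun ξ => -φ ξ) ξ = (starRingEnd ℂ) (E φ ξ) := by
    intro ξ
    rw [E, E, ← Complex.exp_conj, map_mul, Complex.conj_I, Complex.conj_ofReal]
    push_cast
    ring_nf
  simp only [h]
  rw [intervalIntegral, integral_conj, integral_conj,
    ← map_sub, RCLike.norm_conj, ← intervalIntegral]

-- growth lemma
lemma growth {ψ ψ' : ℝ → ℝ} {a b lam : ℝ}
    (hd : ∀ ξ, HasDerivAt ψ (ψ' ξ) ξ) (hc : Continuous ψ')
    (hlow : ∀ ξ ∈ Icc a b, lam ≤ ψ' ξ) :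
    ∀ x ∈ Icc a b, ∀ y ∈ Icc a b, x ≤ y → lam * (y - x) ≤ ψ y - ψ x := by
  intro x hx y hy hxy
  have hsub : Icc x y ⊆ Icc a b := Icc_subset_Icc hx.1 hy.2
  have hftc : ψ y - ψ x = ∫ ξ in x..y, ψ' ξ := by
    rw [intervalIntegral.integral_eq_sub_of_hasDerivAt
      (fun ξ _ => hd ξ) (hc.intervalIntegrable x y)]
  have hmono : ∫ ξ in x..y, lam ≤ ∫ ξ in x..y, ψ' ξ := by
    apply intervalIntegral.integral_mono_on hxy (intervalIntegrable_const)
      (hc.intervalIntegrable x y)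
    intro ξ hξ
    exact hlow ξ (hsub hξ)
  rw [intervalIntegral.integral_const, smul_eq_mul] at hmono
  rw [hftc]
  linarith [hmono]

lemma splitting {f : ℝ → ℂ} {ψ ψ' : ℝ → ℝ} {a b lam δ B : ℝ}
    (hab : a ≤ b) (hlam : 0 < lam) (hδ : 0 < δ) (hB : 0 ≤ B)
    (hfc : Continuous f) (hf1 : ∀ ξ, ‖f ξ‖ ≤ 1)
    (hd : ∀ ξ, HasDerivAt ψ (ψ' ξ) ξ) (hc : Continuous ψ')
    (hlow : ∀ ξ ∈ Icc a b, lam ≤ ψ' ξ)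
    (hside : ∀ p q, p ∈ Icc a b → q ∈ Icc a b → p ≤ q →
      ((∀ ξ ∈ Icc p q, ψ ξ ≤ -δ) ∨ (∀ ξ ∈ Icc p q, δ ≤ ψ ξ)) →
      ‖∫ ξ in p..q, f ξ‖ ≤ B) :
    ‖∫ ξ in a..b, f ξ‖ ≤ 2 * δ / lam + 2 * B := by
  have hψc : Continuous ψ := by
    rw [continuous_iff_continuousAt]; exact fun ξ => (hd ξ).continuousAt
  have hgrow := growth hd hc hlow
  have hmem : ∀ {x : ℝ}, x ∈ Icc a b → x ∈ Icc a b := fun h => h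
  have hma : a ∈ Icc a b := ⟨le_refl a, hab⟩
  have hmb : b ∈ Icc a b := ⟨hab, le_refl b⟩
  have htriv : 0 ≤ 2 * δ / lam := by positivity
  by_cases hcase1 : δ ≤ ψ a
  · have : ∀ ξ ∈ Icc a b, δ ≤ ψ ξ := by
      intro ξ hξ
      have := hgrow a hma ξ hξ hξ.1
      nlinarith [mul_nonneg hlam.le (sub_nonneg.2 hξ.1)]
    have := hside a b hma hmb hab (Or.inr this)
    linarith
  by_cases hcase2 : ψ b ≤ -δ
  · have : ∀ ξ ∈ Icc a b, ψ ξ ≤ -δ := by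
      intro ξ hξ
      have := hgrow ξ hξ b hmb hξ.2
      nlinarith [mul_nonneg hlam.le (sub_nonneg.2 hξ.2)]
    have := hside a b hma hmb hab (Or.inl this)
    linarith
  push_neg at hcase1 hcase2
  -- construct p
  have hp : ∃ p ∈ Icc a b, -δ ≤ ψ p ∧ (ψ p ≤ -δ ∨ p = a) ∧ ‖∫ ξ in a..p, f ξ‖ ≤ B := by
    by_cases hpa : ψ a ≤ -δ
    · have hsub : Icc (ψ a) (ψ b) ⊆ ψ '' Icc a b :=
        intermediate_value_Icc hab hψc.continuousOn
      obtain ⟨p, hpmem, hψp⟩ := hsub ⟨hpa, hcase2.le⟩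
      refine ⟨p, hpmem, hψp.ge, Or.inl hψp.le, ?_⟩
      apply hside a p hma hpmem hpmem.1
      left
      intro ξ hξ
      have := hgrow ξ ⟨le_trans hma.1 hξ.1, le_trans hξ.2 hpmem.2⟩ p hpmem hξ.2
      nlinarith [mul_nonneg hlam.le (sub_nonneg.2 hξ.2), hψp.le]
    · push_neg at hpa
      refine ⟨a, hma, hpa.le, Or.inr rfl, ?_⟩
      simp [hB]
  -- construct q
  have hq : ∃ q ∈ Icc a b, ψ q ≤ δ ∧ (δ ≤ ψ q ∨ q = b) ∧ ‖∫ ξ in q..b, f ξ‖ ≤ B := by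
    by_cases hqb : δ ≤ ψ b
    · have hsub : Icc (ψ a) (ψ b) ⊆ ψ '' Icc a b :=
        intermediate_value_Icc hab hψc.continuousOn
      obtain ⟨q, hqmem, hψq⟩ := hsub ⟨hcase1.le, hqb⟩
      refine ⟨q, hqmem, hψq.le, Or.inl hψq.ge, ?_⟩
      apply hside q b hqmem hmb hqmem.2
      right
      intro ξ hξ
      have := hgrow q hqmem ξ ⟨le_trans hqmem.1 hξ.1, hξ.2⟩ hξ.1
      nlinarith [mul_nonneg hlam.le (sub_nonneg.2 hξ.1), hψq.ge]
    · push_neg at hqb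
      refine ⟨b, hmb, hqb.le, Or.inr rfl, ?_⟩
      simp [hB]
  obtain ⟨p, hpmem, hpge, hple, hpbd⟩ := hp
  obtain ⟨q, hqmem, hqle, hqge, hqbd⟩ := hq
  have hpq : p ≤ q := by
    by_contra hlt
    push_neg at hlt
    rcases hple with hple | rfl
    · rcases hqge with hqge | rfl
      · have := hgrow q hqmem p hpmem hlt.le
        nlinarith [mul_pos hlam (sub_pos.2 hlt)]
      · exact absurd hpmem.2 (not_le.2 hlt)
    · exact absurd hqmem.1 (not_le.2 hlt)
  have hmid : q - p ≤ 2 * δ / lam := by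
    have := hgrow p hpmem q hqmem hpq
    rw [le_div_iff₀ hlam]
    nlinarith
  have hmidbd : ‖∫ ξ in p..q, f ξ‖ ≤ 2 * δ / lam := by
    have h1 := intervalIntegral.norm_integral_le_of_norm_le_const (C := 1)
      (f := f) (a := p) (b := q) (fun x _ => hf1 x)
    rw [abs_of_nonneg (by linarith), one_mul] at h1
    linarith
  have hsplit : (∫ ξ in a..b, f ξ)
      = (∫ ξ in a..p, f ξ) + (∫ ξ in p..q, f ξ) + (∫ ξ in q..b, f ξ) := by
    rw [intervalIntegral.integral_add_adjacent_intervals (hfc.intervalIntegrable a p)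
      (hfc.intervalIntegrable p q),
      intervalIntegral.integral_add_adjacent_intervals (hfc.intervalIntegrable a q)
      (hfc.intervalIntegrable q b)]
  rw [hsplit]
  calc ‖(∫ ξ in a..p, f ξ) + (∫ ξ in p..q, f ξ) + (∫ ξ in q..b, f ξ)‖
      ≤ ‖(∫ ξ in a..p, f ξ)‖ + ‖(∫ ξ in p..q, f ξ)‖ + ‖(∫ ξ in q..b, f ξ)‖ :=
        (norm_add_le _ _).trans (by gcongr; exact norm_add_le _ _)
    _ ≤ B + 2 * δ / lam + B := add_le_add (add_le_add hpbd hmidbd) hqbd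
    _ = 2 * δ / lam + 2 * B := by ring

lemma osc2 {φ φ' φ'' : ℝ → ℝ} {a b δ : ℝ} (hab : a ≤ b) (hδ : 0 < δ)
    (hd1 : ∀ ξ, HasDerivAt φ (φ' ξ) ξ) (hd2 : ∀ ξ, HasDerivAt φ' (φ'' ξ) ξ)
    (hc2 : Continuous φ'')
    (hsign' : (∀ ξ ∈ Icc a b, φ' ξ ≤ -δ) ∨ (∀ ξ ∈ Icc a b, δ ≤ φ' ξ))
    (hsign'' : (∀ ξ ∈ Icc a b, 0 ≤ φ'' ξ) ∨ (∀ ξ ∈ Icc a b, φ'' ξ ≤ 0)) :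
    ‖∫ ξ in a..b, E φ ξ‖ ≤ 3 / δ := by
  rcases hsign' with hs | hs
  · rw [← norm_int_neg φ]
    apply osc2pos hab hδ (fun ξ => (hd1 ξ).neg) (fun ξ => (hd2 ξ).neg) hc2.neg
    · intro ξ hξ
      have := hs ξ hξ
      linarith
    · rcases hsign'' with h | h
      · exact Or.inr (fun ξ hξ => by linarith [h ξ hξ])
      · exact Or.inl (fun ξ hξ => by linarith [h ξ hξ])
  · exact osc2pos hab hδ hd1 hd2 hc2 hs hsign''

lemma osc3pos {φ φ' φ'' φ''' : ℝ → ℝ} {a b lam : ℝ} (hab : a ≤ b) (hlam : 0 < lam)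
    (hd1 : ∀ ξ, HasDerivAt φ (φ' ξ) ξ) (hd2 : ∀ ξ, HasDerivAt φ' (φ'' ξ) ξ)
    (hd3 : ∀ ξ, HasDerivAt φ'' (φ''' ξ) ξ)
    (hlow : ∀ ξ ∈ Icc a b, lam ≤ φ'' ξ) :
    ‖∫ ξ in a..b, E φ ξ‖ ≤ 8 / Real.sqrt lam := by
  have hc2 : Continuous φ'' := by
    rw [continuous_iff_continuousAt]; exact fun ξ => (hd3 ξ).continuousAt
  have hc0 : Continuous φ := by
    rw [continuous_iff_continuousAt]; exact fun ξ => (hd1 ξ).continuousAt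
  have hs : 0 < Real.sqrt lam := Real.sqrt_pos.2 hlam
  have hs2 : Real.sqrt lam * Real.sqrt lam = lam := Real.mul_self_sqrt hlam.le
  have hB : (0:ℝ) ≤ 3 / Real.sqrt lam := by positivity
  have hmain := splitting (f := E φ) (ψ := φ') (ψ' := φ'') (δ := Real.sqrt lam)
    (B := 3 / Real.sqrt lam) hab hlam hs hB (contE hc0) (fun ξ => (normE φ ξ).le)
    hd2 hc2 hlow ?side
  case side =>
    intro p q hp hq hpq hside
    refine osc2 hpq hs hd1 hd2 hc2 hside (Or.inl ?_)
    intro ξ hξ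
    have hmem : ξ ∈ Icc a b := ⟨le_trans hp.1 hξ.1, le_trans hξ.2 hq.2⟩
    linarith [hlow ξ hmem]
  have heq : 2 * Real.sqrt lam / lam + 2 * (3 / Real.sqrt lam) = 8 / Real.sqrt lam := by
    field_simp
    nlinarith [hs2]
  linarith [hmain, heq.le]

lemma osc3 {φ φ' φ'' φ''' : ℝ → ℝ} {a b lam : ℝ} (hab : a ≤ b) (hlam : 0 < lam)
    (hd1 : ∀ ξ, HasDerivAt φ (φ' ξ) ξ) (hd2 : ∀ ξ, HasDerivAt φ' (φ'' ξ) ξ)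
    (hd3 : ∀ ξ, HasDerivAt φ'' (φ''' ξ) ξ)
    (hsign : (∀ ξ ∈ Icc a b, lam ≤ φ'' ξ) ∨ (∀ ξ ∈ Icc a b, φ'' ξ ≤ -lam)) :
    ‖∫ ξ in a..b, E φ ξ‖ ≤ 8 / Real.sqrt lam := by
  rcases hsign with hs | hs
  · exact osc3pos hab hlam hd1 hd2 hd3 hs
  · rw [← norm_int_neg φ]
    apply osc3pos (φ' := fun ξ => -φ' ξ) (φ'' := fun ξ => -φ'' ξ) (φ''' := fun ξ => -φ''' ξ)
      hab hlam (fun ξ => (hd1 ξ).neg) (fun ξ => (hd2 ξ).neg) (fun ξ => (hd3 ξ).neg)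
    intro ξ hξ
    linarith [hs ξ hξ]

lemma osc4 {φ φ' φ'' φ''' : ℝ → ℝ} {a b lam : ℝ} (hab : a ≤ b) (hlam : 0 < lam)
    (hd1 : ∀ ξ, HasDerivAt φ (φ' ξ) ξ) (hd2 : ∀ ξ, HasDerivAt φ' (φ'' ξ) ξ)
    (hd3 : ∀ ξ, HasDerivAt φ'' (φ''' ξ) ξ) (hc3 : Continuous φ''')
    (hsign : (∀ ξ ∈ Icc a b, lam ≤ φ''' ξ) ∨ (∀ ξ ∈ Icc a b, φ''' ξ ≤ -lam)) :
    ‖∫ ξ in a..b, E φ ξ‖ ≤ 18 * lam ^ (-(1/3) : ℝ) := by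
  have hc0 : Continuous φ := by
    rw [continuous_iff_continuousAt]; exact fun ξ => (hd1 ξ).continuousAt
  set μ : ℝ := lam ^ ((2:ℝ)/3) with hμdef
  have hμ : 0 < μ := Real.rpow_pos_of_pos hlam _
  have hsqrtμ : Real.sqrt μ = lam ^ ((1:ℝ)/3) := by
    rw [hμdef, Real.sqrt_eq_rpow, ← Real.rpow_mul hlam.le]
    norm_num
  have hμlam : μ / lam = lam ^ (-(1/3) : ℝ) := by
    rw [hμdef, show ((2:ℝ)/3) = (-(1/3):ℝ)+1 from by norm_num, Real.rpow_add_one hlam.ne']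
    field_simp
  have hB : (0:ℝ) ≤ 8 / Real.sqrt μ := by positivity
  have key : ∀ (g g' g'' g''' : ℝ → ℝ),
      (∀ ξ, HasDerivAt g (g' ξ) ξ) → (∀ ξ, HasDerivAt g' (g'' ξ) ξ) →
      (∀ ξ, HasDerivAt g'' (g''' ξ) ξ) → Continuous g → Continuous g''' →
      (∀ ξ ∈ Icc a b, lam ≤ g''' ξ) →
      ‖∫ ξ in a..b, E g ξ‖ ≤ 18 * lam ^ (-(1/3) : ℝ) := by
    intro g g' g'' g''' hg1 hg2 hg3 hgc0 hgc3 hglow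
    have hmain := splitting (f := E g) (ψ := g'') (ψ' := g''') (δ := μ)
      (B := 8 / Real.sqrt μ) hab hlam hμ hB (contE hgc0) (fun ξ => (normE g ξ).le)
      hg3 hgc3 hglow ?side
    case side =>
      intro p q hp hq hpq hside
      refine osc3 hpq hμ hg1 hg2 hg3 ?_
      rcases hside with h | h
      · exact Or.inr h
      · exact Or.inl h
    have heq : 2 * μ / lam + 2 * (8 / Real.sqrt μ) = 18 * lam ^ (-(1/3) : ℝ) := by
      have hpos3 : (0:ℝ) < lam ^ ((1:ℝ)/3) := Real.rpow_pos_of_pos hlam _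
      rw [mul_div_assoc, hμlam, hsqrtμ, Real.rpow_neg hlam.le]
      field_simp
      ring
    linarith [hmain, heq.le]
  rcases hsign with hs | hs
  · exact key φ φ' φ'' φ''' hd1 hd2 hd3 hc0 hc3 hs
  · rw [← norm_int_neg φ]
    apply key (fun ξ => -φ ξ) (fun ξ => -φ' ξ) (fun ξ => -φ'' ξ) (fun ξ => -φ''' ξ)
      (fun ξ => (hd1 ξ).neg) (fun ξ => (hd2 ξ).neg) (fun ξ => (hd3 ξ).neg) hc0.neg hc3.neg
    intro ξ hξ
    linarith [hs ξ hξ]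

noncomputable def w (γ : ℝ) (ξ : ℝ) : ℝ :=
  (2 - 2 * Real.cos ξ) ^ 2 + γ * (2 - 2 * Real.cos ξ)
noncomputable def w1 (γ : ℝ) (ξ : ℝ) : ℝ := 2 * Real.sin ξ * (4 - 4 * Real.cos ξ + γ)
noncomputable def w2 (γ : ℝ) (ξ : ℝ) : ℝ :=
  8 + (8 + 2 * γ) * Real.cos ξ - 16 * (Real.cos ξ) ^ 2
noncomputable def w3 (γ : ℝ) (ξ : ℝ) : ℝ := 2 * Real.sin ξ * (16 * Real.cos ξ - 4 - γ)
noncomputable def w4 (γ : ℝ) (ξ : ℝ) : ℝ :=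
  2 * Real.cos ξ * (16 * Real.cos ξ - 4 - γ) - 32 * (Real.sin ξ) ^ 2

lemma contw (γ : ℝ) : Continuous (w γ) := by unfold w; fun_prop
lemma contw1 (γ : ℝ) : Continuous (w1 γ) := by unfold w1; fun_prop
lemma contw2 (γ : ℝ) : Continuous (w2 γ) := by unfold w2; fun_prop
lemma contw3 (γ : ℝ) : Continuous (w3 γ) := by unfold w3; fun_prop
lemma contw4 (γ : ℝ) : Continuous (w4 γ) := by unfold w4; fun_prop

lemma hdw (γ : ℝ) (ξ : ℝ) : HasDerivAt (w γ) (w1 γ ξ) ξ := by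
  have hc := Real.hasDerivAt_cos ξ
  have h1 : HasDerivAt (fun ξ => 2 - 2 * Real.cos ξ) (2 * Real.sin ξ) ξ := by
    simpa using ((hc.const_mul 2).const_sub 2)
  have h2 := (h1.pow 2).add (h1.const_mul γ)
  refine HasDerivAt.congr_deriv h2 ?_
  unfold w1; push_cast; ring

lemma hdw1 (γ : ℝ) (ξ : ℝ) : HasDerivAt (w1 γ) (w2 γ ξ) ξ := by
  have hc := Real.hasDerivAt_cos ξ
  have hs := Real.hasDerivAt_sin ξ
  have h1 : HasDerivAt (fun ξ => 2 * Real.sin ξ) (2 * Real.cos ξ) ξ := by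
    simpa using hs.const_mul 2
  have h2 : HasDerivAt (fun ξ => 4 - 4 * Real.cos ξ + γ) (4 * Real.sin ξ) ξ := by
    simpa using (((hc.const_mul 4).const_sub 4).add_const γ)
  have h3 := h1.mul h2
  refine HasDerivAt.congr_deriv h3 ?_
  unfold w2
  have hpy := Real.sin_sq_add_cos_sq ξ
  nlinarith [hpy]

lemma hdw2 (γ : ℝ) (ξ : ℝ) : HasDerivAt (w2 γ) (w3 γ ξ) ξ := by
  have hc := Real.hasDerivAt_cos ξ
  have h1 : HasDerivAt (fun ξ => 8 + (8 + 2*γ) * Real.cos ξ) (-((8 + 2*γ) * Real.sin ξ)) ξ := by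
    simpa using ((hc.const_mul (8 + 2*γ)).const_add 8)
  have h2 : HasDerivAt (fun ξ => 16 * (Real.cos ξ)^2) (16 * (2 * Real.cos ξ * (-Real.sin ξ))) ξ := by
    simpa using ((hc.pow 2).const_mul 16)
  have h3 := h1.sub h2
  refine HasDerivAt.congr_deriv h3 ?_
  unfold w3; ring

lemma hdw3 (γ : ℝ) (ξ : ℝ) : HasDerivAt (w3 γ) (w4 γ ξ) ξ := by
  have hc := Real.hasDerivAt_cos ξ
  have hs := Real.hasDerivAt_sin ξ
  have h1 : HasDerivAt (fun ξ => 2 * Real.sin ξ) (2 * Real.cos ξ) ξ := by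
    simpa using hs.const_mul 2
  have h2 : HasDerivAt (fun ξ => 16 * Real.cos ξ - 4 - γ) (-16 * Real.sin ξ) ξ := by
    simpa using (((hc.const_mul 16).sub_const 4).sub_const γ)
  have h3 := h1.mul h2
  refine HasDerivAt.congr_deriv h3 ?_
  unfold w4; ring

-- Lipschitz-type bounds
lemma w3bd (γ : ℝ) (ξ : ℝ) : |w3 γ ξ| ≤ 72 + 2 * |γ| := by
  have h1 := Real.neg_one_le_sin ξ
  have h2 := Real.sin_le_one ξ
  have h3 := Real.neg_one_le_cos ξ
  have h4 := Real.cos_le_one ξ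
  have h5 : -|γ| ≤ γ := neg_abs_le γ
  have h6 : γ ≤ |γ| := le_abs_self γ
  have h7 : (0:ℝ) ≤ |γ| := abs_nonneg γ
  have p1 : (0:ℝ) ≤ (1 - Real.sin ξ) * ((20 + |γ|) - (16 * Real.cos ξ - 4 - γ)) :=
    mul_nonneg (by linarith) (by linarith)
  have p2 : (0:ℝ) ≤ (1 + Real.sin ξ) * ((20 + |γ|) + (16 * Real.cos ξ - 4 - γ)) :=
    mul_nonneg (by linarith) (by linarith)
  have p3 : (0:ℝ) ≤ (1 - Real.sin ξ) * ((20 + |γ|) + (16 * Real.cos ξ - 4 - γ)) :=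
    mul_nonneg (by linarith) (by linarith)
  have p4 : (0:ℝ) ≤ (1 + Real.sin ξ) * ((20 + |γ|) - (16 * Real.cos ξ - 4 - γ)) :=
    mul_nonneg (by linarith) (by linarith)
  rw [abs_le]
  constructor <;> unfold w3 <;> nlinarith [p1, p2, p3, p4]

lemma w4bd (γ : ℝ) (ξ : ℝ) : |w4 γ ξ| ≤ 72 + 2 * |γ| := by
  have h1 := Real.neg_one_le_sin ξ
  have h2 := Real.sin_le_one ξ
  have h3 := Real.neg_one_le_cos ξ
  have h4 := Real.cos_le_one ξ
  have h5 : -|γ| ≤ γ := neg_abs_le γ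
  have h6 : γ ≤ |γ| := le_abs_self γ
  have h7 : (0:ℝ) ≤ |γ| := abs_nonneg γ
  have hs2 : (Real.sin ξ)^2 ≤ 1 := by nlinarith
  have hs0 : (0:ℝ) ≤ (Real.sin ξ)^2 := sq_nonneg _
  have p1 : (0:ℝ) ≤ (1 - Real.cos ξ) * ((20 + |γ|) - (16 * Real.cos ξ - 4 - γ)) :=
    mul_nonneg (by linarith) (by linarith)
  have p2 : (0:ℝ) ≤ (1 + Real.cos ξ) * ((20 + |γ|) + (16 * Real.cos ξ - 4 - γ)) :=
    mul_nonneg (by linarith) (by linarith)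
  have p3 : (0:ℝ) ≤ (1 - Real.cos ξ) * ((20 + |γ|) + (16 * Real.cos ξ - 4 - γ)) :=
    mul_nonneg (by linarith) (by linarith)
  have p4 : (0:ℝ) ≤ (1 + Real.cos ξ) * ((20 + |γ|) - (16 * Real.cos ξ - 4 - γ)) :=
    mul_nonneg (by linarith) (by linarith)
  rw [abs_le]
  constructor <;> unfold w4 <;> nlinarith [p1, p2, p3, p4]

-- Lipschitz estimates via FTC
lemma lip_of_deriv {g g' : ℝ → ℝ} {L : ℝ}
    (hd : ∀ ξ, HasDerivAt g (g' ξ) ξ) (hc : Continuous g')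
    (hbd : ∀ ξ, |g' ξ| ≤ L) (x y : ℝ) : |g x - g y| ≤ L * |x - y| := by
  have hftc : g x - g y = ∫ ξ in y..x, g' ξ :=
    (intervalIntegral.integral_eq_sub_of_hasDerivAt (fun ξ _ => hd ξ)
      (hc.intervalIntegrable y x)).symm
  rw [hftc, ← Real.norm_eq_abs]
  have := intervalIntegral.norm_integral_le_of_norm_le_const (C := L)
    (f := g') (a := y) (b := x) (fun ξ _ => by rw [Real.norm_eq_abs]; exact hbd ξ)
  exact this

lemma lipw2 (γ : ℝ) (x y : ℝ) : |w2 γ x - w2 γ y| ≤ (72 + 2 * |γ|) * |x - y| :=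
  lip_of_deriv (hdw2 γ) (contw3 γ) (w3bd γ) x y

lemma lipw3 (γ : ℝ) (x y : ℝ) : |w3 γ x - w3 γ y| ≤ (72 + 2 * |γ|) * |x - y| :=
  lip_of_deriv (hdw3 γ) (contw4 γ) (w4bd γ) x y

-- no common zeros
lemma no_common_zero {γ : ℝ} (h8 : γ ≠ -8) (h0 : γ ≠ 0) (ξ : ℝ) :
    0 < (w2 γ ξ) ^ 2 + (w3 γ ξ) ^ 2 := by
  rcases lt_or_eq_of_le (by positivity : (0:ℝ) ≤ (w2 γ ξ) ^ 2 + (w3 γ ξ) ^ 2) with h | h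
  · exact h
  exfalso
  have h2 : w2 γ ξ = 0 := by nlinarith [sq_nonneg (w2 γ ξ), sq_nonneg (w3 γ ξ)]
  have h3 : w3 γ ξ = 0 := by nlinarith [sq_nonneg (w2 γ ξ), sq_nonneg (w3 γ ξ)]
  have hpy := Real.sin_sq_add_cos_sq ξ
  unfold w3 at h3
  unfold w2 at h2
  rcases mul_eq_zero.1 h3 with hs | hA
  · rcases mul_eq_zero.1 hs with h' | hs
    · norm_num at h'
    · have hc2 : (Real.cos ξ - 1) * (Real.cos ξ + 1) = 0 := by nlinarith
      rcases mul_eq_zero.1 hc2 with hc | hc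
      · have hcc : Real.cos ξ = 1 := by linarith
        rw [hcc] at h2
        exact h0 (by nlinarith)
      · have hcc : Real.cos ξ = -1 := by linarith
        rw [hcc] at h2
        exact h8 (by nlinarith)
  · have hγ : γ = 16 * Real.cos ξ - 4 := by linarith
    rw [hγ] at h2
    nlinarith [sq_nonneg (Real.cos ξ)]

/-- For `γ ∈ outside {−8, 0}` the fundamental solution on `ℤ` decays like `(1+|t|)^{-1/3}`. -/
theorem stmt1 (γ : ℝ) (hγ : γ ≠ -8 ∧ γ ≠ 0) :
    ∃ C > (0 : ℝ), ∀ (x : ℤ) (t : ℝ),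
      ‖G1 γ x t‖ ≤ C * (1 + |t|) ^ (-(1 / 3 : ℝ)) := by
  obtain ⟨h8, h0⟩ := hγ
  have hπ : 0 < Real.pi := Real.pi_pos
  set L : ℝ := 72 + 2 * |γ| with hLdef
  have hL : 0 < L := by positivity
  -- minimum of w2^2 + w3^2 on [-π, π]
  obtain ⟨ξ₀, hξ₀, hminOn⟩ := (isCompact_Icc (a := -Real.pi) (b := Real.pi)).exists_isMinOn
    ⟨0, by constructor <;> linarith⟩
    (Continuous.continuousOn
      (((contw2 γ).pow 2).add ((contw3 γ).pow 2) :
        Continuous (fun ξ => (w2 γ ξ)^2 + (w3 γ ξ)^2)))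
  have hmin : ∀ ξ ∈ Icc (-Real.pi) Real.pi,
      (w2 γ ξ₀)^2 + (w3 γ ξ₀)^2 ≤ (w2 γ ξ)^2 + (w3 γ ξ)^2 := isMinOn_iff.mp hminOn
  set m : ℝ := (w2 γ ξ₀)^2 + (w3 γ ξ₀)^2 with hmdef
  have hm : 0 < m := no_common_zero h8 h0 ξ₀
  set d : ℝ := Real.sqrt m with hddef
  have hd : 0 < d := Real.sqrt_pos.2 hm
  have hd2 : d * d = m := Real.mul_self_sqrt hm.le
  set c : ℝ := d / 4 with hcdef
  have hc : 0 < c := by positivity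
  -- dichotomy
  have ddich : ∀ ξ ∈ Icc (-Real.pi) Real.pi, d/2 ≤ |w2 γ ξ| ∨ d/2 ≤ |w3 γ ξ| := by
    intro ξ hξ
    by_contra hcon
    push_neg at hcon
    obtain ⟨ha2, ha3⟩ := hcon
    have := hmin ξ hξ
    nlinarith [sq_abs (w2 γ ξ), sq_abs (w3 γ ξ), abs_nonneg (w2 γ ξ), abs_nonneg (w3 γ ξ)]
  -- partition size
  set n : ℕ := ⌈2 * Real.pi * L / c⌉₊ + 1 with hndef
  have hn : 0 < n := Nat.succ_pos _
  have hnn : (0:ℝ) < n := by exact_mod_cast hn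
  have hmesh : 2 * Real.pi / n * L ≤ c := by
    have h1 : 2 * Real.pi * L / c ≤ n := by
      calc 2 * Real.pi * L / c ≤ ⌈2 * Real.pi * L / c⌉₊ := Nat.le_ceil _
        _ ≤ n := by exact_mod_cast Nat.le_succ _
    rw [div_mul_eq_mul_div, div_le_iff₀ hnn]
    calc 2 * Real.pi * L ≤ c * (2 * Real.pi * L / c) := by
          rw [mul_div_cancel₀]; exact hc.ne'
      _ ≤ c * n := by nlinarith
  set X : ℕ → ℝ := fun i => -Real.pi + i * (2 * Real.pi / n) with hXdef
  have hX0 : X 0 = -Real.pi := by simp [hXdef]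
  have hXn : X n = Real.pi := by
    rw [hXdef]
    field_simp
    ring
  have hXstep : ∀ i : ℕ, X (i+1) - X i = 2 * Real.pi / n := by
    intro i; rw [hXdef]; push_cast; ring
  have hXmono : ∀ i : ℕ, X i ≤ X (i+1) := by
    intro i
    have h := hXstep i
    have hpos : 0 < 2 * Real.pi / n := by positivity
    rw [← h] at hpos
    linarith
  have hXmem : ∀ i : ℕ, i ≤ n → X i ∈ Icc (-Real.pi) Real.pi := by
    intro i hi
    constructor
    · rw [hXdef]
      have : (0:ℝ) ≤ i * (2 * Real.pi / n) := by positivity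
      linarith
    · rw [← hXn, hXdef]
      have : (i:ℝ) ≤ n := by exact_mod_cast hi
      have hpos : 0 < 2 * Real.pi / n := by positivity
      nlinarith
  -- final constant
  set K : ℝ := 8 / Real.sqrt c + 18 * c ^ (-(1/3) : ℝ) with hKdef
  have hK : 0 < K := by
    rw [hKdef]
    have := Real.sqrt_pos.2 hc
    have := Real.rpow_pos_of_pos hc (-(1/3) : ℝ)
    positivity
  clear_value K X

  clear_value n c d m
  have h1nk : (0:ℝ) < 1 + n*K := by nlinarith [mul_nonneg hnn.le hK.le]
  have hCpos : (0:ℝ) < (2:ℝ) ^ ((1:ℝ)/3) * (1 + n * K) :=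
    mul_pos (Real.rpow_pos_of_pos two_pos ((1:ℝ)/3)) h1nk
  refine ⟨(2:ℝ) ^ ((1:ℝ)/3) * (1 + n * K), hCpos, ?_⟩
  intro x t
  set φ : ℝ → ℝ := fun ξ => (x:ℝ) * ξ + w γ ξ * t with hφdef
  have hφc : Continuous φ := by
    rw [hφdef]
    exact (continuous_const.mul continuous_id).add ((contw γ).mul continuous_const)
  have hG : ‖G1 γ x t‖ = (2*Real.pi)⁻¹ * ‖∫ ξ in (-Real.pi)..Real.pi, E φ ξ‖ := by
    rw [G1, norm_mul]
    congr 1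
    rw [Complex.norm_real, Real.norm_eq_abs, abs_of_pos (by positivity)]
  rcases le_or_gt (|t|) 1 with ht | ht
  · -- small t
    have hb : ‖∫ ξ in (-Real.pi)..Real.pi, E φ ξ‖ ≤ 2*Real.pi := by
      have := osc0 (φ := φ) (a := -Real.pi) (b := Real.pi) (by linarith)
      linarith
    have h1 : ‖G1 γ x t‖ ≤ 1 := by
      rw [hG, inv_mul_le_iff₀ (by positivity), mul_one]
      exact hb
    have hbase : (1+|t|) ≤ 2 := by linarith
    have h3 : (2:ℝ) ^ (-(1/3):ℝ) ≤ (1+|t|) ^ (-(1/3):ℝ) :=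
      Real.rpow_le_rpow_of_nonpos (by positivity) hbase (by norm_num)
    have h4 : (2:ℝ)^((1:ℝ)/3) * (2:ℝ)^(-(1/3):ℝ) = 1 := by
      rw [← Real.rpow_add (by norm_num)]; norm_num
    have h5 : 1 ≤ 1 + (n:ℝ)*K := by nlinarith [mul_nonneg hnn.le hK.le]
    have hp3 : (0:ℝ) < (2:ℝ)^((1:ℝ)/3) := by positivity
    calc ‖G1 γ x t‖ ≤ 1 := h1
      _ = (2:ℝ)^((1:ℝ)/3) * 1 * (2:ℝ)^(-(1/3):ℝ) := by rw [mul_one, h4]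
      _ ≤ (2:ℝ)^((1:ℝ)/3) * (1 + n*K) * (1+|t|)^(-(1/3):ℝ) := by
          apply mul_le_mul
          · nlinarith [hp3, mul_nonneg hnn.le hK.le]
          · exact h3
          · positivity
          · exact hCpos.le
  · -- large t
    have htpos : 0 < |t| := lt_trans one_pos ht
    set lam : ℝ := c * |t| with hlamdef
    have hlam : 0 < lam := mul_pos hc htpos
    have hd1 : ∀ ξ, HasDerivAt φ ((x:ℝ) + w1 γ ξ * t) ξ := by
      intro ξ
      have h1 : HasDerivAt (fun ξ : ℝ => (x:ℝ) * ξ) (x:ℝ) ξ := by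
        simpa using (hasDerivAt_id ξ).const_mul (x:ℝ)
      exact h1.add ((hdw γ ξ).mul_const t)
    have hd2 : ∀ ξ, HasDerivAt (fun ξ => (x:ℝ) + w1 γ ξ * t) (w2 γ ξ * t) ξ :=
      fun ξ => ((hdw1 γ ξ).mul_const t).const_add _
    have hd3 : ∀ ξ, HasDerivAt (fun ξ => w2 γ ξ * t) (w3 γ ξ * t) ξ :=
      fun ξ => (hdw2 γ ξ).mul_const t
    have hc3 : Continuous (fun ξ => w3 γ ξ * t) := (contw3 γ).mul continuous_const
    have piecebd : ∀ i : ℕ, i < n → ‖∫ ξ in (X i)..(X (i+1)), E φ ξ‖ ≤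
        8 / Real.sqrt lam + 18 * lam ^ (-(1/3) : ℝ) := by
      intro i hi
      have hmemi := hXmem i (le_of_lt hi)
      have hmemi1 := hXmem (i+1) hi
      have hLlen : ∀ ξ ∈ Icc (X i) (X (i+1)), L * |ξ - X i| ≤ c := by
        intro ξ hξ
        have h1 : |ξ - X i| ≤ 2*Real.pi/n := by
          rw [abs_of_nonneg (by linarith [hξ.1])]
          linarith [hξ.2, hXstep i]
        calc L * |ξ - X i| ≤ L * (2*Real.pi/n) := by nlinarith
          _ = 2*Real.pi/n * L := by ring
          _ ≤ c := hmesh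
      have hnn1 : (0:ℝ) ≤ 8 / Real.sqrt lam := by positivity
      have hnn2 : (0:ℝ) ≤ 18 * lam ^ (-(1/3) : ℝ) :=
        mul_nonneg (by norm_num) (Real.rpow_nonneg hlam.le _)
      have hdc : d / 2 - c = c := by rw [hcdef]; ring
      rcases ddich (X i) hmemi with hcase | hcase
      · -- |w2| big : osc3
        have hbound : (∀ ξ ∈ Icc (X i) (X (i+1)), c ≤ w2 γ ξ) ∨
            (∀ ξ ∈ Icc (X i) (X (i+1)), w2 γ ξ ≤ -c) := by
          rcases abs_cases (w2 γ (X i)) with ⟨heq, _⟩ | ⟨heq, _⟩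
          · left
            intro ξ hξ
            have hl := (lipw2 γ ξ (X i)).trans (hLlen ξ hξ)
            have habs := abs_le.mp hl
            rw [heq] at hcase
            linarith [habs.1]
          · right
            intro ξ hξ
            have hl := (lipw2 γ ξ (X i)).trans (hLlen ξ hξ)
            have habs := abs_le.mp hl
            rw [heq] at hcase
            linarith [habs.2]
        have hsign : (∀ ξ ∈ Icc (X i) (X (i+1)), lam ≤ w2 γ ξ * t) ∨
            (∀ ξ ∈ Icc (X i) (X (i+1)), w2 γ ξ * t ≤ -lam) := by
          rcases le_or_gt 0 t with htp | htn
          · have habs : |t| = t := abs_of_nonneg htp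
            rcases hbound with hb | hb
            · left; intro ξ hξ
              have := hb ξ hξ
              rw [hlamdef, habs]
              nlinarith
            · right; intro ξ hξ
              have := hb ξ hξ
              rw [hlamdef, habs]
              nlinarith
          · have habs : |t| = -t := abs_of_neg htn
            rcases hbound with hb | hb
            · right; intro ξ hξ
              have := hb ξ hξ
              rw [hlamdef, habs]
              nlinarith
            · left; intro ξ hξ
              have := hb ξ hξ
              rw [hlamdef, habs]
              nlinarith
        have := osc3 (hXmono i) hlam hd1 hd2 hd3 hsign
        linarith
      · -- |w3| big : osc4
        have hbound : (∀ ξ ∈ Icc (X i) (X (i+1)), c ≤ w3 γ ξ) ∨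
            (∀ ξ ∈ Icc (X i) (X (i+1)), w3 γ ξ ≤ -c) := by
          rcases abs_cases (w3 γ (X i)) with ⟨heq, _⟩ | ⟨heq, _⟩
          · left
            intro ξ hξ
            have hl := (lipw3 γ ξ (X i)).trans (hLlen ξ hξ)
            have habs := abs_le.mp hl
            rw [heq] at hcase
            linarith [habs.1]
          · right
            intro ξ hξ
            have hl := (lipw3 γ ξ (X i)).trans (hLlen ξ hξ)
            have habs := abs_le.mp hl
            rw [heq] at hcase
            linarith [habs.2]
        have hsign : (∀ ξ ∈ Icc (X i) (X (i+1)), lam ≤ w3 γ ξ * t) ∨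
            (∀ ξ ∈ Icc (X i) (X (i+1)), w3 γ ξ * t ≤ -lam) := by
          rcases le_or_gt 0 t with htp | htn
          · have habs : |t| = t := abs_of_nonneg htp
            rcases hbound with hb | hb
            · left; intro ξ hξ
              have := hb ξ hξ
              rw [hlamdef, habs]
              nlinarith
            · right; intro ξ hξ
              have := hb ξ hξ
              rw [hlamdef, habs]
              nlinarith
          · have habs : |t| = -t := abs_of_neg htn
            rcases hbound with hb | hb
            · right; intro ξ hξ
              have := hb ξ hξ
              rw [hlamdef, habs]
              nlinarith
            · left; intro ξ hξ
              have := hb ξ hξ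
              rw [hlamdef, habs]
              nlinarith
        have := osc4 (hXmono i) hlam hd1 hd2 hd3 hc3 hsign
        linarith
    -- sum over pieces
    have hintpiece : ∀ i < n, IntervalIntegrable (E φ) volume (X i) (X (i+1)) :=
      fun i _ => (contE hφc).intervalIntegrable _ _
    have hsum := intervalIntegral.sum_integral_adjacent_intervals hintpiece
    have htot : ‖∫ ξ in (-Real.pi)..Real.pi, E φ ξ‖ ≤
        n * (8 / Real.sqrt lam + 18 * lam ^ (-(1/3) : ℝ)) := by
      rw [← hX0, ← hXn, ← hsum]
      calc ‖∑ i ∈ Finset.range n, ∫ ξ in (X i)..(X (i+1)), E φ ξ‖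
          ≤ ∑ i ∈ Finset.range n, ‖∫ ξ in (X i)..(X (i+1)), E φ ξ‖ := norm_sum_le _ _
        _ ≤ ∑ _i ∈ Finset.range n, (8 / Real.sqrt lam + 18 * lam ^ (-(1/3) : ℝ)) :=
            Finset.sum_le_sum (fun i hi => piecebd i (Finset.mem_range.mp hi))
        _ = n * (8 / Real.sqrt lam + 18 * lam ^ (-(1/3) : ℝ)) := by
            rw [Finset.sum_const, Finset.card_range, nsmul_eq_mul]
    -- bound by K * |t|^{-1/3}
    have hbK : 8 / Real.sqrt lam + 18 * lam ^ (-(1/3):ℝ) ≤ K * |t| ^ (-(1/3):ℝ) := by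
      have hsq : Real.sqrt lam = Real.sqrt c * Real.sqrt |t| := Real.sqrt_mul hc.le _
      have h12 : |t| ^ (-(1/2):ℝ) ≤ |t| ^ (-(1/3):ℝ) :=
        Real.rpow_le_rpow_of_exponent_le ht.le (by norm_num)
      have hsqrt_t : Real.sqrt |t| = |t| ^ ((1:ℝ)/2) := Real.sqrt_eq_rpow _
      have hst : 0 < Real.sqrt |t| := Real.sqrt_pos.2 htpos
      have hsc : 0 < Real.sqrt c := Real.sqrt_pos.2 hc
      have e1 : 8 / Real.sqrt lam = (8 / Real.sqrt c) * |t| ^ (-(1/2):ℝ) := by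
        rw [hsq, hsqrt_t, Real.rpow_neg (abs_nonneg t), ← hsqrt_t]
        field_simp
      have e2 : lam ^ (-(1/3):ℝ) = c ^ (-(1/3):ℝ) * |t| ^ (-(1/3):ℝ) := by
        rw [hlamdef, Real.mul_rpow hc.le (abs_nonneg t)]
      have h8c : (0:ℝ) ≤ 8 / Real.sqrt c := by positivity
      have hmul : (8/Real.sqrt c) * |t|^(-(1/2):ℝ) ≤ (8/Real.sqrt c) * |t|^(-(1/3):ℝ) :=
        mul_le_mul_of_nonneg_left h12 h8c
      rw [e1, e2, hKdef]
      ring_nf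
      ring_nf at hmul
      linarith
    -- final chain
    have hfrac : (2*Real.pi)⁻¹ ≤ 1 := by
      rw [inv_le_one_iff₀]
      right; linarith [Real.pi_gt_three]
    have hbb : 1 + |t| ≤ 2*|t| := by linarith
    have h5 : (2*|t|) ^ (-(1/3):ℝ) ≤ (1+|t|)^(-(1/3):ℝ) :=
      Real.rpow_le_rpow_of_nonpos (by positivity) hbb (by norm_num)
    have h6 : (2*|t|)^(-(1/3):ℝ) = 2^(-(1/3):ℝ) * |t|^(-(1/3):ℝ) :=
      Real.mul_rpow (by norm_num) (abs_nonneg t)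
    have h7 : |t|^(-(1/3):ℝ) = 2^((1:ℝ)/3) * (2^(-(1/3):ℝ) * |t|^(-(1/3):ℝ)) := by
      rw [← mul_assoc, ← Real.rpow_add two_pos]
      norm_num
    have hnormint : ‖∫ ξ in (-Real.pi)..Real.pi, E φ ξ‖ ≤ n * (K * |t| ^ (-(1/3):ℝ)) := by
      calc ‖∫ ξ in (-Real.pi)..Real.pi, E φ ξ‖
          ≤ n * (8 / Real.sqrt lam + 18 * lam ^ (-(1/3) : ℝ)) := htot
        _ ≤ n * (K * |t| ^ (-(1/3):ℝ)) := by
            apply mul_le_mul_of_nonneg_left hbK (Nat.cast_nonneg n)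
    rw [hG]
    have hrpos : (0:ℝ) ≤ ‖∫ ξ in (-Real.pi)..Real.pi, E φ ξ‖ := norm_nonneg _
    calc (2*Real.pi)⁻¹ * ‖∫ ξ in (-Real.pi)..Real.pi, E φ ξ‖
        ≤ 1 * (n * (K * |t| ^ (-(1/3):ℝ))) := by
          apply mul_le_mul hfrac hnormint hrpos (by norm_num)
      _ = n * K * |t| ^ (-(1/3):ℝ) := by ring
      _ = n * K * (2^((1:ℝ)/3) * (2^(-(1/3):ℝ) * |t|^(-(1/3):ℝ))) := by rw [← h7]
      _ = 2^((1:ℝ)/3) * (n * K) * (2*|t|)^(-(1/3):ℝ) := by rw [h6]; ring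
      _ ≤ 2^((1:ℝ)/3) * (1 + n * K) * (1+|t|)^(-(1/3):ℝ) := by
          apply mul_le_mul
          · nlinarith [Real.rpow_pos_of_pos (two_pos) ((1:ℝ)/3)]
          · exact h5
          · positivity
          · exact hCpos.le
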